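/- Let K be a compact convex set with nonempty interior in ℝ², and let x be a boundary point of K at which the interior angle of K is at most π/3. Then x is a diametral point of K: there exists y ∈ K with ‖x − y‖ equal to the diameter of K. -/
import Mathlib


open EuclideanGeometry Metric Set

noncomputable section

abbrev E2 := EuclideanSpace ℝ (Fin 2)

/-- The interior angle of a planar convex body `K` at a boundary point `x`:
the angle measure of the tangent cone of `K` at `x`, i.e. the supremum of the
angles `∠ a x b` over points `a, b` of `K` distinct from `x`. -/
noncomputable def interiorAngle (K : Set E2) (x : E2) : ℝ :=
  sSup {θ : ℝ | ∃ a ∈ K, ∃ b ∈ K, a ≠ x ∧ b ≠ x ∧ θ = ∠ a x b}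

/-- Any boundary point of a planar convex body at which the interior angle is at
most `π/3` is a diametral point. -/
theorem diametral_of_angle_le_pi_div_three
    (K : Set E2) (hcomp : IsCompact K) (hconv : Convex ℝ K)
    (hint : (interior K).Nonempty)
    (x : E2) (hx : x ∈ frontier K)
    (hang : interiorAngle K x ≤ Real.pi / 3) :
    ∃ y ∈ K, dist x y = Metric.diam K := by
  have hKne : K.Nonempty := hint.mono interior_subset
  have hxK : x ∈ K := by
    have : frontier K ⊆ K := by
      rw [frontier_eq_closure_inter_closure]
      exact fun z hz => hcomp.isClosed.closure_subset hz.1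
    exact this hx
  -- farthest point from x
  obtain ⟨y, hyK, hy⟩ := hcomp.exists_isMaxOn hKne
    ((continuous_const.dist continuous_id).continuousOn)
  refine ⟨y, hyK, le_antisymm (dist_le_diam_of_mem hcomp.isBounded hxK hyK) ?_⟩
  refine diam_le_of_forall_dist_le dist_nonneg ?_
  intro a ha b hb
  have hkey : ∀ c ∈ K, dist x c ≤ dist x y := fun c hc => hy hc
  by_cases hax : a = x
  · subst hax
    calc dist a b = dist a b := rfl
    _ ≤ dist a y := by simpa using hkey b hb
  by_cases hbx : b = x
  · subst hbx
    rw [dist_comm]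
    exact hkey a ha
  -- both differ from x; use angle bound
  have hθmem : ∠ a x b ∈ {θ : ℝ | ∃ a ∈ K, ∃ b ∈ K, a ≠ x ∧ b ≠ x ∧ θ = ∠ a x b} :=
    ⟨a, ha, b, hb, hax, hbx, rfl⟩
  have hbdd : BddAbove {θ : ℝ | ∃ a ∈ K, ∃ b ∈ K, a ≠ x ∧ b ≠ x ∧ θ = ∠ a x b} := by
    refine ⟨Real.pi, ?_⟩
    rintro θ ⟨a, -, b, -, -, -, rfl⟩
    exact angle_le_pi a x b
  have hθ : ∠ a x b ≤ Real.pi / 3 := le_trans (le_csSup hbdd hθmem) hang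
  have hcos : (1 : ℝ) / 2 ≤ Real.cos (∠ a x b) := by
    have := Real.cos_pi_div_three
    calc (1 : ℝ) / 2 = Real.cos (Real.pi / 3) := Real.cos_pi_div_three.symm
    _ ≤ Real.cos (∠ a x b) := by
        apply Real.cos_le_cos_of_nonneg_of_le_pi (angle_nonneg a x b) ?_ hθ
        linarith [Real.pi_pos]
  have hlaw := EuclideanGeometry.law_cos a x b
  have hs : dist a x ≤ dist x y := by rw [dist_comm]; exact hkey a ha
  have ht : dist b x ≤ dist x y := by rw [dist_comm]; exact hkey b hb
  have h1 : dist a x * dist b x ≤ dist a x * dist b x * (2 * Real.cos (∠ a x b)) := by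
    nlinarith [mul_nonneg (dist_nonneg (x := a) (y := x)) (dist_nonneg (x := b) (y := x)),
      hcos]
  nlinarith [hlaw, h1, dist_nonneg (x := a) (y := b), dist_nonneg (x := x) (y := y),
    mul_nonneg (sub_nonneg.2 hs) (dist_nonneg (x := a) (y := x)),
    mul_nonneg (sub_nonneg.2 ht) (dist_nonneg (x := b) (y := x)),
    mul_nonneg (sub_nonneg.2 hs) (sub_nonneg.2 ht)]
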